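/- Define, for a bounded operator C on H̃, N(C) = sup { ‖C(z,1)‖ / √(1 + ‖z‖²) : z ∈ H, ‖z‖ < 1 }. If H ≠ {0}, then N is not submultiplicative with respect to the ε-product: there exist bounded operators C, C' on H̃ with N(C ∗ε C') > N(C)·N(C'). Concretely, for a unit vector v ∈ H, the operators C(z,λ) = (⟨v,z⟩·v, 0) and C'(z,λ) = (λ·v, 0) satisfy N(C ∗ε C') = 1, N(C) = 1/√2 and N(C') = 1. -/

import Mathlib

/-- The extended Hilbert space `H̃ = H ⊕ ℂ` (Hilbert space direct sum). -/
noncomputable abbrev ExtH (H : Type*) [NormedAddCommGroup H] [InnerProductSpace ℂ H] :=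
  WithLp 2 (H × ℂ)

/-- The element `(z, a)` of `H̃`. -/
noncomputable def mk2 {H : Type*} [NormedAddCommGroup H] [InnerProductSpace ℂ H]
    (z : H) (a : ℂ) : ExtH H :=
  (WithLp.equiv 2 (H × ℂ)).symm (z, a)

/-- The "ball" seminorm `N(C) = sup { ‖C(z,1)‖/√(1 + ‖z‖²) : ‖z‖ < 1 }` on operators
on `H̃`. -/
noncomputable def ballOpNorm {H : Type*} [NormedAddCommGroup H] [InnerProductSpace ℂ H]
    (C : ExtH H →L[ℂ] ExtH H) : ℝ :=
  sSup { r : ℝ | ∃ z : H, ‖z‖ < 1 ∧ r = ‖C (mk2 z 1)‖ / Real.sqrt (1 + ‖z‖ ^ 2) }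

section Aux
variable {H : Type*} [NormedAddCommGroup H] [InnerProductSpace ℂ H] [CompleteSpace H]

open ContinuousLinearMap in
noncomputable def Cop (v : H) : ExtH H →L[ℂ] ExtH H :=
  ((WithLp.prodContinuousLinearEquiv 2 ℂ H ℂ).symm : H × ℂ →L[ℂ] ExtH H) ∘L
    (inl ℂ H ℂ) ∘L ((toSpanSingleton ℂ v) ∘L (innerSL ℂ v)) ∘L (fst ℂ H ℂ) ∘L
    ((WithLp.prodContinuousLinearEquiv 2 ℂ H ℂ) : ExtH H →L[ℂ] H × ℂ)

open ContinuousLinearMap in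
noncomputable def Cop' (v : H) : ExtH H →L[ℂ] ExtH H :=
  ((WithLp.prodContinuousLinearEquiv 2 ℂ H ℂ).symm : H × ℂ →L[ℂ] ExtH H) ∘L
    (inl ℂ H ℂ) ∘L (toSpanSingleton ℂ v) ∘L (snd ℂ H ℂ) ∘L
    ((WithLp.prodContinuousLinearEquiv 2 ℂ H ℂ) : ExtH H →L[ℂ] H × ℂ)

lemma Cop_apply (v z : H) (l : ℂ) : Cop v (mk2 z l) = mk2 ((inner ℂ v z : ℂ) • v) 0 := by
  simp [Cop, mk2, ContinuousLinearMap.toSpanSingleton_apply]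

lemma Cop'_apply (v z : H) (l : ℂ) : Cop' v (mk2 z l) = mk2 (l • v) 0 := by
  simp [Cop', mk2, ContinuousLinearMap.toSpanSingleton_apply]

lemma norm_mk2 (z : H) (a : ℂ) : ‖mk2 z a‖ = Real.sqrt (‖z‖ ^ 2 + ‖a‖ ^ 2) :=
  WithLp.prod_norm_eq_of_L2 _

lemma norm_mk2_zero (z : H) : ‖mk2 z 0‖ = ‖z‖ := by
  simp [norm_mk2, Real.sqrt_sq (norm_nonneg z)]

lemma one_add_sq_pos (t : ℝ) : (0:ℝ) < 1 + t ^ 2 := by positivity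

lemma sqrt_one_add_sq_pos (t : ℝ) : (0:ℝ) < Real.sqrt (1 + t ^ 2) :=
  Real.sqrt_pos.mpr (one_add_sq_pos t)

lemma sSup_const_div : sSup { r : ℝ | ∃ z : H, ‖z‖ < 1 ∧
    r = 1 / Real.sqrt (1 + ‖z‖ ^ 2) } = 1 := by
  apply le_antisymm
  · refine csSup_le ⟨1 / Real.sqrt (1 + ‖(0:H)‖ ^ 2), 0, by simpa using one_pos, rfl⟩ ?_
    rintro r ⟨z, hz, rfl⟩
    rw [div_le_one (sqrt_one_add_sq_pos _)]
    nlinarith [Real.sq_sqrt (one_add_sq_pos ‖z‖).le, sqrt_one_add_sq_pos ‖z‖, sq_nonneg ‖z‖]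
  · apply le_csSup
    · refine ⟨1, ?_⟩
      rintro r ⟨z, hz, rfl⟩
      rw [div_le_one (sqrt_one_add_sq_pos _)]
      nlinarith [Real.sq_sqrt (one_add_sq_pos ‖z‖).le, sqrt_one_add_sq_pos ‖z‖, sq_nonneg ‖z‖]
    · exact ⟨0, by simpa using one_pos, by simp⟩

lemma ratio_le (t : ℝ) (h0 : 0 ≤ t) (h1 : t ≤ 1) :
    t / Real.sqrt (1 + t ^ 2) ≤ 1 / Real.sqrt 2 := by
  rw [div_le_div_iff₀ (sqrt_one_add_sq_pos t) (by positivity)]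
  have : t * Real.sqrt 2 = Real.sqrt (2 * t ^ 2) := by
    rw [Real.sqrt_mul' _ (by positivity), Real.sqrt_sq h0]; ring
  rw [this, one_mul]
  exact Real.sqrt_le_sqrt (by nlinarith)

lemma sSup_inner_div (v : H) (hv : ‖v‖ = 1) :
    sSup { r : ℝ | ∃ z : H, ‖z‖ < 1 ∧
      r = ‖(inner ℂ v z : ℂ)‖ / Real.sqrt (1 + ‖z‖ ^ 2) } = 1 / Real.sqrt 2 := by
  have hub : ∀ r ∈ { r : ℝ | ∃ z : H, ‖z‖ < 1 ∧
      r = ‖(inner ℂ v z : ℂ)‖ / Real.sqrt (1 + ‖z‖ ^ 2) }, r ≤ 1 / Real.sqrt 2 := by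
    rintro r ⟨z, hz, rfl⟩
    calc ‖(inner ℂ v z : ℂ)‖ / Real.sqrt (1 + ‖z‖ ^ 2)
        ≤ ‖z‖ / Real.sqrt (1 + ‖z‖ ^ 2) := by
          gcongr
          calc ‖(inner ℂ v z : ℂ)‖ ≤ ‖v‖ * ‖z‖ := norm_inner_le_norm v z
            _ = ‖z‖ := by rw [hv, one_mul]
      _ ≤ 1 / Real.sqrt 2 := ratio_le _ (norm_nonneg z) hz.le
  have hne : { r : ℝ | ∃ z : H, ‖z‖ < 1 ∧
      r = ‖(inner ℂ v z : ℂ)‖ / Real.sqrt (1 + ‖z‖ ^ 2) }.Nonempty :=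
    ⟨_, 0, by simpa using one_pos, rfl⟩
  apply le_antisymm (csSup_le hne hub)
  rw [le_csSup_iff ⟨_, hub⟩ hne]
  intro b hb
  have hcont : ContinuousAt (fun t : ℝ => t / Real.sqrt (1 + t ^ 2)) 1 := by
    apply ContinuousAt.div continuousAt_id
    · exact (Real.continuous_sqrt.comp (by continuity)).continuousAt
    · exact (sqrt_one_add_sq_pos 1).ne'
  have htend : Filter.Tendsto (fun t : ℝ => t / Real.sqrt (1 + t ^ 2))
      (nhdsWithin 1 (Set.Iio 1)) (nhds (1 / Real.sqrt 2)) := by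
    have h2 := (hcont.continuousWithinAt (s := Set.Iio 1)).tendsto
    have : (1:ℝ) / Real.sqrt (1 + 1 ^ 2) = 1 / Real.sqrt 2 := by norm_num
    rwa [this] at h2
  refine le_of_tendsto htend ?_
  filter_upwards [Ioo_mem_nhdsLT_of_mem (Set.mem_Ioc.mpr ⟨one_pos, le_refl 1⟩)] with t ht
  apply hb
  refine ⟨(t : ℂ) • v, ?_, ?_⟩
  · rw [norm_smul, hv, mul_one]
    simpa [abs_of_pos ht.1] using ht.2
  · rw [inner_smul_right, inner_self_eq_norm_sq_to_K, hv]
    rw [norm_smul, hv, mul_one]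
    simp [Complex.norm_of_nonneg ht.1.le, abs_of_pos ht.1]

end Aux

open ContinuousLinearMap in
/-- if `H ≠ {0}`, the norm `N` is not submultiplicative for the ε-product:
for a unit vector `v`, the operators `C(z,λ) = (⟨v,z⟩v, 0)` and `C'(z,λ) = (λv, 0)`
satisfy `N(C ∗ε C') = 1 > (1/√2)·1 = N(C)·N(C')`. -/
theorem ballOpNorm_not_submultiplicative
    {H : Type*} [NormedAddCommGroup H] [InnerProductSpace ℂ H] [CompleteSpace H]
    (ε : ExtH H →L[ℂ] ExtH H) (hε : ∀ (z : H) (l : ℂ), ε (mk2 z l) = mk2 (-z) l)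
    (v : H) (hv : ‖v‖ = 1) :
    ∃ C C' : ExtH H →L[ℂ] ExtH H,
      (∀ (z : H) (l : ℂ), C (mk2 z l) = mk2 ((inner ℂ v z : ℂ) • v) 0) ∧
      (∀ (z : H) (l : ℂ), C' (mk2 z l) = mk2 (l • v) 0) ∧
      ballOpNorm (C ∘L ε ∘L C') = 1 ∧
      ballOpNorm C = 1 / Real.sqrt 2 ∧
      ballOpNorm C' = 1 ∧
      ballOpNorm (C ∘L ε ∘L C') > ballOpNorm C * ballOpNorm C' := by
  have h1 : ballOpNorm (Cop v ∘L ε ∘L Cop' v) = 1 := by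
    unfold ballOpNorm
    have key : ∀ z : H, ‖(Cop v ∘L ε ∘L Cop' v) (mk2 z 1)‖ = 1 := by
      intro z
      rw [ContinuousLinearMap.comp_apply, ContinuousLinearMap.comp_apply, Cop'_apply,
        one_smul, hε, Cop_apply, inner_neg_right, inner_self_eq_norm_sq_to_K, hv]
      rw [norm_mk2_zero]
      simp [norm_smul, hv]
    simp only [key]
    exact sSup_const_div
  have h2 : ballOpNorm (Cop v) = 1 / Real.sqrt 2 := by
    unfold ballOpNorm
    have key : ∀ z : H, ‖(Cop v) (mk2 z 1)‖ = ‖(inner ℂ v z : ℂ)‖ := by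
      intro z
      rw [Cop_apply, norm_mk2_zero, norm_smul, hv, mul_one]
    simp only [key]
    exact sSup_inner_div v hv
  have h3 : ballOpNorm (Cop' v) = 1 := by
    unfold ballOpNorm
    have key : ∀ z : H, ‖(Cop' v) (mk2 z 1)‖ = 1 := by
      intro z
      rw [Cop'_apply, one_smul, norm_mk2_zero, hv]
    simp only [key]
    exact sSup_const_div
  refine ⟨Cop v, Cop' v, Cop_apply v, Cop'_apply v, h1, h2, h3, ?_⟩
  rw [h1, h2, h3, mul_one]
  have hs : (1:ℝ) < Real.sqrt 2 := by
    rw [show (1:ℝ) = Real.sqrt 1 by simp]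
    exact Real.sqrt_lt_sqrt (by norm_num) (by norm_num)
  exact (div_lt_one (by positivity)).mpr hs
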